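/- Singular stationary point (partial lake): consider the semidiscrete scheme with upwind-by-level interface value (θh)^s_{(i,j)} = θ_i h_i if w_i > w_j and θ_j h_j if w_i ≤ w_j, where w_i = g(z_i + h_i). If v_i = 0 for all cells, w_i = w̄ for all i in a subset I, and h_i = 0 with z_i > w̄/g for all i in the complement of I, then for every cell i the momentum residual Σ_{j∈N(i)} l_{(i,j)} (w_j - w_i)(θh)^s_{(i,j)} n_a|_{(i,j)} vanishes, so the state is a stationary point. -/
import Mathlib


/-- singular stationary point (partial lake): with zero velocity,
constant free surface w̄ on the wet cells I and dry cells (h=0) with soil above the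
lake level elsewhere, the free-surface gradient sum with upwind-by-level interface
values vanishes in every cell. -/
theorem singular_lake_stationary
    {ι : Type*} [Fintype ι] [DecidableEq ι]
    (N : ι → Finset ι)                       -- neighbors
    (l : ι → ι → ℝ) (hl : ∀ i j, j ∈ N i → 0 < l i j)
    (n : ι → ι → ℝ × ℝ)                      -- unit normals
    (g : ℝ) (hg : 0 < g)
    (z h θ : ι → ℝ)
    (hθ : ∀ i, θ i ∈ Set.Ioc (0:ℝ) 1)
    (hnonneg : ∀ i, 0 ≤ h i)
    (w : ι → ℝ) (hw : ∀ i, w i = g * (z i + h i))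
    -- upwind-by-level interface value (θh)^s_{(i,j)}
    (s : ι → ι → ℝ)
    (hs : ∀ i j, s i j = if w i > w j then θ i * h i else θ j * h j)
    (I : Finset ι) (wbar : ℝ)
    (hlake : ∀ i ∈ I, w i = wbar)
    (hdry : ∀ i ∉ I, h i = 0 ∧ z i > wbar / g) :
    ∀ i, (∑ j ∈ N i, (l i j * (w j - w i) * s i j) • n i j) = (0 : ℝ × ℝ) := by
  -- For dry cells: w i = g * z i > wbar
  have hdryw : ∀ i ∉ I, w i = g * z i ∧ w i > wbar := by
    intro i hi
    obtain ⟨h0, hz⟩ := hdry i hi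
    constructor
    · rw [hw i, h0, add_zero]
    · rw [hw i, h0, add_zero]
      calc wbar = g * (wbar / g) := by field_simp
        _ < g * z i := by exact mul_lt_mul_of_pos_left hz hg
  intro i
  apply Finset.sum_eq_zero
  intro j _
  suffices hz : l i j * (w j - w i) * s i j = 0 by rw [hz, zero_smul]
  by_cases hiI : i ∈ I
  · by_cases hjI : j ∈ I
    · rw [hlake i hiI, hlake j hjI, sub_self, mul_zero, zero_mul]
    · -- j dry: w i = wbar < w j, so s i j = θ j * h j = 0
      obtain ⟨hj0, _⟩ := hdry j hjI
      have : ¬ (w i > w j) := by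
        rw [hlake i hiI]; exact not_lt.2 (le_of_lt (hdryw j hjI).2)
      rw [hs i j, if_neg this, hj0, mul_zero, mul_zero]
  · by_cases hjI : j ∈ I
    · -- i dry: w i > wbar = w j, so s i j = θ i * h i = 0
      have : w i > w j := by rw [hlake j hjI]; exact (hdryw i hiI).2
      rw [hs i j, if_pos this, (hdry i hiI).1, mul_zero, mul_zero]
    · rw [hs i j]
      rcases lt_or_ge (w j) (w i) with hlt | hle
      · rw [if_pos hlt, (hdry i hiI).1, mul_zero, mul_zero]
      · rw [if_neg (not_lt.2 hle), (hdry j hjI).1, mul_zero, mul_zero]
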